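/- For an M/M/1 queue with arrival rate λ = μ = service rate, reward R = C/μ per service completion and holding cost rate C per customer, the dispatcher using static threshold 1 (admit a customer iff the queue is empty) starting from an empty queue has expected total net profit exactly 0 at every time t: E[G(t)] = E[G(τ_t)] − R + C·E[σ_s(t)] = 0. -/

import Mathlib

open MeasureTheory ProbabilityTheory

namespace StmtAux
open Real Set
open scoped ENNReal NNReal

variable {mu : ℝ}

lemma expMeasure_def (r : ℝ) :
    expMeasure r = MeasureTheory.volume.withDensity (exponentialPDF r) := rfl

lemma expMeasure_Iic (hmu : 0 < mu) (c : ℝ) :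
    expMeasure mu (Iic c) = ENNReal.ofReal (if 0 ≤ c then 1 - exp (-(mu * c)) else 0) := by
  haveI := isProbabilityMeasure_expMeasure hmu
  rw [← ofReal_cdf (expMeasure mu) c]
  rw [cdf_expMeasure_eq hmu]

lemma expMeasure_Iio_zero (hmu : 0 < mu) : expMeasure mu (Iio 0) = 0 := by
  rw [expMeasure_def, withDensity_apply _ measurableSet_Iio]
  exact lintegral_exponentialPDF_of_nonpos le_rfl

lemma expMeasure_ae_nonneg (hmu : 0 < mu) : ∀ᵐ s ∂(expMeasure mu), 0 ≤ s := by
  rw [ae_iff]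
  have : {s : ℝ | ¬ 0 ≤ s} = Iio 0 := by ext s; simp
  rw [this]; exact expMeasure_Iio_zero hmu

lemma expMeasure_Ioi (hmu : 0 < mu) {u : ℝ} (hu : 0 ≤ u) :
    expMeasure mu (Ioi u) = ENNReal.ofReal (exp (-(mu * u))) := by
  haveI := isProbabilityMeasure_expMeasure hmu
  have h : (Iic u)ᶜ = Ioi u := compl_Iic
  rw [← h, prob_compl_eq_one_sub measurableSet_Iic, expMeasure_Iic hmu, if_pos hu,
    ← ENNReal.ofReal_one, ← ENNReal.ofReal_sub _ (by simp only [sub_nonneg, exp_le_one_iff]; exact neg_nonpos.mpr (mul_nonneg hmu.le hu) : (0:ℝ) ≤ 1 - exp (-(mu*u)))]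
  norm_num

/-- the law of a random variable with the given exponential tail is `expMeasure`. -/
lemma law_eq_expMeasure {Ω : Type*} [MeasurableSpace Ω] {P : Measure Ω} [IsProbabilityMeasure P]
    (hmu : 0 < mu) {Z : Ω → ℝ} (hm : Measurable Z)
    (htail : ∀ s : ℝ, 0 ≤ s → P {ω | s < Z ω} = ENNReal.ofReal (Real.exp (-mu * s))) :
    P.map Z = expMeasure mu := by
  haveI := isProbabilityMeasure_expMeasure hmu
  haveI : IsProbabilityMeasure (P.map Z) := Measure.isProbabilityMeasure_map hm.aemeasurable
  refine Measure.ext_of_Iic _ _ (fun c => ?_)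
  rw [Measure.map_apply hm measurableSet_Iic, expMeasure_Iic hmu]
  have hIic : Z ⁻¹' (Iic c) = {ω | c < Z ω}ᶜ := by ext ω; simp [not_lt]
  by_cases hc : 0 ≤ c
  · rw [hIic, prob_compl_eq_one_sub (measurableSet_lt measurable_const hm), htail c hc,
      if_pos hc, ← ENNReal.ofReal_one, ← ENNReal.ofReal_sub _ (by positivity)]
    norm_num [neg_mul]
  · -- P (Z ≤ c) ≤ P (Z ≤ 0) = 0
    rw [if_neg hc, ENNReal.ofReal_zero]
    have h0 : P {ω | (0:ℝ) < Z ω} = 1 := by simpa using htail 0 le_rfl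
    have hsub : Z ⁻¹' (Iic c) ⊆ {ω | (0:ℝ) < Z ω}ᶜ := by
      intro ω hω; simp only [mem_preimage, mem_Iic] at hω
      simp only [mem_compl_iff, mem_setOf_eq, not_lt]
      linarith [lt_of_not_ge hc, hω]
    refine le_antisymm (le_trans (measure_mono hsub) ?_) zero_le
    rw [prob_compl_eq_one_sub (measurableSet_lt measurable_const hm), h0]
    simp


lemma integrableOn_exp_neg_Ioo (hmu : 0 < mu) {c : ℝ} :
    IntegrableOn (fun u => exp (-(mu * u))) (Ioo 0 c) :=
  (exp_neg_integrableOn_Ioc hmu).mono_set Ioo_subset_Ioc_self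

lemma integral_exp_neg_Ioo (hmu : 0 < mu) {c : ℝ} (hc : 0 ≤ c) :
    ∫ u in Ioo (0:ℝ) c, exp (-(mu * u)) = (1 - exp (-(mu * c))) / mu := by
  rw [← integral_Ioc_eq_integral_Ioo, ← intervalIntegral.integral_of_le hc]
  have h1 : ∀ x : ℝ, exp (-(mu * x)) = exp ((-mu) * x) := by intro x; ring_nf
  simp only [h1]
  rw [intervalIntegral.integral_comp_mul_left (fun x => exp x) (by linarith : (-mu) ≠ 0),
    mul_zero, integral_exp, smul_eq_mul, exp_zero]
  field_simp
  ring

lemma integral_min_exp (hmu : 0 < mu) {c : ℝ} (hc : 0 ≤ c) :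
    ∫ s, min c s ∂(expMeasure mu) = (1 - exp (-(mu * c))) / mu := by
  haveI := isProbabilityMeasure_expMeasure hmu
  have hnn : 0 ≤ᵐ[expMeasure mu] fun s => min c s :=
    (expMeasure_ae_nonneg hmu).mono fun s hs => le_min hc hs
  have hmeasf : Measurable fun s : ℝ => min c s := measurable_const.min measurable_id
  rw [integral_eq_lintegral_of_nonneg_ae hnn hmeasf.aestronglyMeasurable,
    lintegral_eq_lintegral_meas_lt _ hnn hmeasf.aemeasurable]
  have hset : ∀ u ∈ Ioi (0:ℝ), expMeasure mu {s | u < min c s}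
      = (Ioo (0:ℝ) c).indicator (fun u => ENNReal.ofReal (exp (-(mu * u)))) u := by
    intro u hu
    have hu0 : 0 < u := hu
    by_cases huc : u < c
    · have : {s : ℝ | u < min c s} = Ioi u := by
        ext s; simp [lt_min_iff, huc]
      rw [this, expMeasure_Ioi hmu hu0.le, indicator_of_mem (by exact ⟨hu0, huc⟩)]
    · have : {s : ℝ | u < min c s} = ∅ := by
        ext s; simp only [mem_setOf_eq, lt_min_iff, mem_empty_iff_false, iff_false, not_and]
        intro h; exact absurd h huc
      rw [this, indicator_of_notMem (fun hmem => huc hmem.2)]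
      simp
  rw [setLIntegral_congr_fun measurableSet_Ioi hset,
    lintegral_indicator measurableSet_Ioo _, Measure.restrict_restrict measurableSet_Ioo,
    inter_eq_left.mpr Ioo_subset_Ioi_self,
    ← ofReal_integral_eq_lintegral_ofReal (integrableOn_exp_neg_Ioo hmu)
      (ae_of_all _ fun u => (exp_pos _).le),
    integral_exp_neg_Ioo hmu hc, ENNReal.toReal_ofReal]
  have h1 : exp (-(mu * c)) ≤ 1 := exp_le_one_iff.mpr (neg_nonpos.mpr (by positivity))
  exact div_nonneg (by linarith) hmu.le


lemma expMeasure_Iic_toReal (hmu : 0 < mu) {c : ℝ} (hc : 0 ≤ c) :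
    (expMeasure mu (Iic c)).toReal = 1 - exp (-(mu * c)) := by
  rw [expMeasure_Iic hmu, if_pos hc, ENNReal.toReal_ofReal]
  have h1 : exp (-(mu * c)) ≤ 1 := exp_le_one_iff.mpr (neg_nonpos.mpr (by positivity))
  linarith

lemma inner_zero (hmu : 0 < mu) (C t b : ℝ) (ht : 0 ≤ t) :
    ∫ s, ((C / mu) * (if b + s ≤ t then (1:ℝ) else 0)
      - C * (min t (b + s) - min t b)) ∂(expMeasure mu) = 0 := by
  haveI := isProbabilityMeasure_expMeasure hmu
  by_cases hb : b ≤ t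
  · set c := t - b with hcdef
    have hc : 0 ≤ c := by simp [hcdef]; linarith
    have hiff : ∀ s : ℝ, (b + s ≤ t) ↔ s ≤ c := fun s => by constructor <;> intro h <;> [skip; skip] <;> simp [hcdef] at * <;> linarith
    have hmin : ∀ s : ℝ, min t (b + s) - min t b = min c s := by
      intro s
      have h1 : min t b = b := min_eq_right hb
      have h2 : t = b + c := by simp [hcdef]
      rw [h1, h2, min_add_add_left]
      ring
    have hfun : (fun s : ℝ => (C / mu) * (if b + s ≤ t then (1:ℝ) else 0)
        - C * (min t (b + s) - min t b))
        = fun s : ℝ => (C / mu) * (Iic c).indicator 1 s - C * min c s := by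
      funext s
      rw [hmin s]
      congr 1
      by_cases h : s ≤ c
      · rw [if_pos ((hiff s).mpr h), indicator_of_mem (mem_Iic.mpr h)]
        simp
      · rw [if_neg (fun hh => h ((hiff s).mp hh)), indicator_of_notMem (fun hh => h (mem_Iic.mp hh))]
    rw [hfun]
    have hmeasmin : Measurable fun s : ℝ => min c s := measurable_const.min measurable_id
    have int1 : Integrable ((Iic c).indicator (1 : ℝ → ℝ)) (expMeasure mu) :=
      (integrable_const (1:ℝ)).indicator measurableSet_Iic
    have int2 : Integrable (fun s : ℝ => min c s) (expMeasure mu) := by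
      refine Integrable.mono' (integrable_const c) hmeasmin.aestronglyMeasurable ?_
      filter_upwards [expMeasure_ae_nonneg hmu] with s hs
      rw [Real.norm_eq_abs, abs_le]
      exact ⟨by linarith [le_min hc hs], min_le_left _ _⟩
    rw [integral_sub (int1.const_mul _) (int2.const_mul _), MeasureTheory.integral_const_mul,
      MeasureTheory.integral_const_mul, integral_indicator_one measurableSet_Iic,
      integral_min_exp hmu hc, measureReal_def, expMeasure_Iic_toReal hmu hc]
    field_simp
    ring
  · push_neg at hb
    have hzero : (fun s : ℝ => (C / mu) * (if b + s ≤ t then (1:ℝ) else 0)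
        - C * (min t (b + s) - min t b)) =ᵐ[expMeasure mu] fun _ => (0:ℝ) := by
      filter_upwards [expMeasure_ae_nonneg hmu] with s hs
      have h1 : ¬ (b + s ≤ t) := by linarith
      have h2 : min t (b + s) = t := min_eq_left (by linarith)
      have h3 : min t b = t := min_eq_left hb.le
      rw [if_neg h1, h2, h3]
      ring
    rw [integral_congr_ae hzero, integral_zero]


lemma pair_zero {Ω : Type*} [MeasurableSpace Ω] (P : Measure Ω) [IsProbabilityMeasure P]
    (hmu : 0 < mu) {C : ℝ} (hC : 0 < C) {t : ℝ} (ht : 0 ≤ t) {B S : Ω → ℝ}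
    (hB : Measurable B) (hS : Measurable S) (hind : IndepFun B S P)
    (hBpos : 0 ≤ᵐ[P] B) (hlaw : P.map S = expMeasure mu) :
    ∫ ω, ((C / mu) * (if B ω + S ω ≤ t then (1:ℝ) else 0)
      - C * (min t (B ω + S ω) - min t (B ω))) ∂P = 0 := by
  haveI := isProbabilityMeasure_expMeasure hmu
  haveI : IsProbabilityMeasure (P.map B) := Measure.isProbabilityMeasure_map hB.aemeasurable
  set F : ℝ × ℝ → ℝ := fun p => (C / mu) * (if p.1 + p.2 ≤ t then (1:ℝ) else 0)
      - C * (min t (p.1 + p.2) - min t p.1) with hFdef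
  have hFmeas : Measurable F := by
    apply Measurable.sub
    · apply Measurable.const_mul
      exact Measurable.ite (measurableSet_le (measurable_fst.add measurable_snd)
        measurable_const) measurable_const measurable_const
    · apply Measurable.const_mul
      exact (measurable_const.min (measurable_fst.add measurable_snd)).sub
        (measurable_const.min measurable_fst)
  have hmap : P.map (fun ω => (B ω, S ω)) = (P.map B).prod (expMeasure mu) := by
    rw [← hlaw]
    exact (indepFun_iff_map_prod_eq_prod_map_map hB.aemeasurable hS.aemeasurable).mp hind
  have hstep : ∫ ω, ((C / mu) * (if B ω + S ω ≤ t then (1:ℝ) else 0)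
      - C * (min t (B ω + S ω) - min t (B ω))) ∂P
      = ∫ p, F p ∂((P.map B).prod (expMeasure mu)) := by
    rw [← hmap, integral_map (hB.aemeasurable.prodMk hS.aemeasurable)
      hFmeas.aestronglyMeasurable]
  have hN1 : (P.map B) (Iio 0) = 0 := by
    rw [Measure.map_apply hB measurableSet_Iio]
    have hB0 : ∀ᵐ ω ∂P, (0:ℝ) ≤ B ω := hBpos
    rw [ae_iff] at hB0
    convert hB0 using 2
    ext ω; simp
  have hae : ∀ᵐ p ∂((P.map B).prod (expMeasure mu)), 0 ≤ p.1 ∧ 0 ≤ p.2 := by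
    rw [ae_iff]
    have hU : ((P.map B).prod (expMeasure mu))
        ((Iio 0) ×ˢ (univ : Set ℝ) ∪ (univ : Set ℝ) ×ˢ (Iio 0)) = 0 := by
      refine measure_union_null ?_ ?_
      · rw [Measure.prod_prod, hN1, zero_mul]
      · rw [Measure.prod_prod, expMeasure_Iio_zero hmu, mul_zero]
    refine measure_mono_null (fun p hp => ?_) hU
    simp only [mem_setOf_eq, not_and_or, not_le] at hp
    rcases hp with h | h
    · exact mem_union_left _ (by exact ⟨h, mem_univ _⟩)
    · exact mem_union_right _ (by exact ⟨mem_univ _, h⟩)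
  have hFint : Integrable F ((P.map B).prod (expMeasure mu)) := by
    refine Integrable.mono' (integrable_const (C / mu + C * t))
      hFmeas.aestronglyMeasurable ?_
    filter_upwards [hae] with p hp
    obtain ⟨h1, h2⟩ := hp
    have hd1 : min t p.1 ≤ min t (p.1 + p.2) := min_le_min le_rfl (by linarith)
    have hd2 : min t (p.1 + p.2) ≤ t := min_le_left _ _
    have hd3 : 0 ≤ min t p.1 := le_min ht h1
    have hif : (0:ℝ) ≤ (if p.1 + p.2 ≤ t then (1:ℝ) else 0) ∧
        (if p.1 + p.2 ≤ t then (1:ℝ) else 0) ≤ 1 := by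
      split_ifs <;> norm_num
    rw [Real.norm_eq_abs, hFdef]
    have hCmu : 0 < C / mu := by positivity
    rw [abs_le]
    constructor
    · simp only
      nlinarith [hif.1, hif.2]
    · simp only
      nlinarith [hif.1, hif.2]
  rw [hstep, integral_prod _ hFint]
  have hzero : ∀ b : ℝ, ∫ s, F (b, s) ∂(expMeasure mu) = 0 := fun b =>
    inner_zero hmu C t b ht
  simp only [hzero, integral_zero]


lemma integral_exp_neg_mul_Ioi {b : ℝ} (hb : 0 < b) :
    ∫ x in Ioi (0:ℝ), exp (-b * x) = 1 / b := by
  have h : ∀ x : ℝ, exp (-b * x) = (fun y => exp (-y)) (b * x) := by intro x; simp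
  simp only [h]
  rw [MeasureTheory.integral_comp_mul_left_Ioi (fun y => exp (-y)) 0 hb, mul_zero,
    integral_exp_neg_Ioi, neg_zero, exp_zero, smul_eq_mul, mul_one, one_div]

lemma integral_exp_neg_mul_expMeasure (hmu : 0 < mu) :
    ∫ s, exp (-mu * s) ∂(expMeasure mu) = 1 / 2 := by
  have hg : Measurable fun s : ℝ => ENNReal.ofReal (exp (-mu * s)) :=
    (measurable_const.mul measurable_id).exp.ennreal_ofReal
  have hpdf : Measurable (exponentialPDF mu) :=
    (measurable_exponentialPDFReal mu).ennreal_ofReal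
  rw [integral_eq_lintegral_of_nonneg_ae (ae_of_all _ fun s => (exp_pos _).le)
    ((by fun_prop : Measurable fun s : ℝ => exp (-mu * s)).aestronglyMeasurable),
    expMeasure_def, lintegral_withDensity_eq_lintegral_mul _ hpdf hg]
  have hpt : ∀ s : ℝ, (exponentialPDF mu * fun s => ENNReal.ofReal (exp (-mu * s))) s
      = (Ici (0:ℝ)).indicator (fun s => ENNReal.ofReal (mu * exp (-(2*mu) * s))) s := by
    intro s
    simp only [Pi.mul_apply, exponentialPDF_eq]
    by_cases hs : 0 ≤ s
    · rw [if_pos hs, indicator_of_mem (mem_Ici.mpr hs),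
        ← ENNReal.ofReal_mul (by positivity)]
      congr 1
      rw [mul_assoc, ← exp_add]
      ring_nf
    · rw [if_neg hs, indicator_of_notMem (fun hh => hs (mem_Ici.mp hh)),
        ENNReal.ofReal_zero, zero_mul]
  rw [lintegral_congr hpt, lintegral_indicator measurableSet_Ici _,
    ← MeasureTheory.Measure.restrict_congr_set Ioi_ae_eq_Ici,
    ← ofReal_integral_eq_lintegral_ofReal
      (((exp_neg_integrableOn_Ioi 0 (by positivity : (0:ℝ) < 2*mu))).const_mul mu)
      (ae_of_all _ fun s => by positivity),
    MeasureTheory.integral_const_mul, integral_exp_neg_mul_Ioi (by positivity : (0:ℝ) < 2*mu),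
    ENNReal.toReal_ofReal (by positivity)]
  field_simp

lemma mgf_of_expLaw {Ω : Type*} [MeasurableSpace Ω] {P : Measure Ω} [IsProbabilityMeasure P]
    (hmu : 0 < mu) {Z : Ω → ℝ} (hm : Measurable Z) (hlaw : P.map Z = expMeasure mu) :
    mgf Z P (-mu) = 1 / 2 := by
  have : mgf Z P (-mu) = ∫ x, exp (-mu * x) ∂(P.map Z) := by
    rw [mgf, integral_map hm.aemeasurable
      ((by fun_prop : Measurable fun x : ℝ => exp (-mu * x)).aestronglyMeasurable)]
  rw [this, hlaw, integral_exp_neg_mul_expMeasure hmu]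

lemma sum_pairs (g : ℕ → ℝ) (n : ℕ) :
    ∑ k ∈ Finset.range n, (g (2*k) + g (2*k+1)) = ∑ j ∈ Finset.range (2*n), g j := by
  induction n with
  | zero => simp
  | succ n ih =>
    rw [Finset.sum_range_succ, ih, show 2*(n+1) = (2*n+1)+1 from by ring,
      Finset.sum_range_succ g (2*n+1), show 2*n+1 = (2*n)+1 from rfl,
      Finset.sum_range_succ g (2*n)]
    ring

end StmtAux

open StmtAux Real Set in
open scoped ENNReal NNReal in
set_option maxHeartbeats 1000000 in
/-- For an M/M/1 queue with arrival rate `λ = μ` equal to the service rate, reward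
`R = C/μ` per service completion and holding cost rate `C`, the dispatcher using the
static threshold `1` (admit a customer iff the queue is empty) starting from an empty
queue has expected total net profit exactly `0` at every time `t ≥ 0`.

The system alternates i.i.d. idle periods `A_n = Z_{2n} ~ Exp(μ)` and service periods
`S_n = Z_{2n+1} ~ Exp(μ)`; the `n`-th busy cycle ends at
`τ_{n+1} = Σ_{k≤n} (A_k + S_k)`, a reward `R = C/μ` is collected at each cycle
completion, and the holding cost `C` accrues exactly during the service portions. -/
theorem stmt_18 {Ω : Type*} [MeasurableSpace Ω] (P : Measure Ω) [IsProbabilityMeasure P]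
    (mu C : ℝ) (hmu : 0 < mu) (hC : 0 < C)
    (Z : ℕ → Ω → ℝ) (hmeas : ∀ n, Measurable (Z n))
    (hindep : iIndepFun Z P)
    (htail : ∀ n, ∀ s : ℝ, 0 ≤ s →
      P {ω | s < Z n ω} = ENNReal.ofReal (Real.exp (-mu * s)))
    (t : ℝ) (ht : 0 ≤ t) :
    ∫ ω,
        ((C / mu) *
            (∑' n : ℕ,
              if (∑ k ∈ Finset.range (n + 1), (Z (2 * k) ω + Z (2 * k + 1) ω)) ≤ t
              then (1 : ℝ) else 0)
          - C *
            (∑' n : ℕ,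
              (min t (∑ k ∈ Finset.range (n + 1), (Z (2 * k) ω + Z (2 * k + 1) ω))
                - min t
                    ((∑ k ∈ Finset.range n, (Z (2 * k) ω + Z (2 * k + 1) ω))
                      + Z (2 * n) ω)))) ∂P = 0 := by
  classical
  haveI := isProbabilityMeasure_expMeasure hmu
  have hlaw : ∀ n, P.map (Z n) = expMeasure mu := fun n =>
    law_eq_expMeasure hmu (hmeas n) (htail n)
  -- each Z n is a.s. nonneg
  have hZnn : ∀ᵐ ω ∂P, ∀ n, 0 ≤ Z n ω := by
    rw [ae_all_iff]
    intro n
    have h0 : (P.map (Z n)) (Iio 0) = 0 := by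
      rw [hlaw n]; exact expMeasure_Iio_zero hmu
    rw [Measure.map_apply (hmeas n) measurableSet_Iio] at h0
    rw [ae_iff]
    convert h0 using 2
    ext ω; simp [not_le]
  -- partial sums
  set W : ℕ → Ω → ℝ := fun m ω => ∑ j ∈ Finset.range m, Z j ω with hWdef
  have hWfun : ∀ m, W m = ∑ j ∈ Finset.range m, Z j := by
    intro m; funext ω; rw [hWdef]; simp [Finset.sum_apply]
  have hWmeas : ∀ m, Measurable (W m) := fun m =>
    Finset.measurable_sum _ (fun j _ => hmeas j)
  -- rewriting the cycle sums as partial sums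
  have hsum1 : ∀ (n : ℕ) (ω : Ω),
      (∑ k ∈ Finset.range (n + 1), (Z (2 * k) ω + Z (2 * k + 1) ω)) = W (2 * n + 2) ω := by
    intro n ω
    rw [sum_pairs (fun j => Z j ω) (n+1), hWdef]
    have e : 2 * (n + 1) = 2 * n + 2 := by ring
    rw [e]
  have hsum2 : ∀ (n : ℕ) (ω : Ω),
      (∑ k ∈ Finset.range n, (Z (2 * k) ω + Z (2 * k + 1) ω)) + Z (2 * n) ω
        = W (2 * n + 1) ω := by
    intro n ω
    rw [sum_pairs (fun j => Z j ω) n, hWdef]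
    simp only
    rw [show 2*n+1 = (2*n)+1 from rfl, Finset.sum_range_succ (fun j => Z j ω) (2*n)]
  -- the summands
  set ind : ℕ → Ω → ℝ := fun n ω => if W (2 * n + 2) ω ≤ t then (1:ℝ) else 0 with hinddef
  set acost : ℕ → Ω → ℝ :=
    fun n ω => min t (W (2 * n + 2) ω) - min t (W (2 * n + 1) ω) with hacostdef
  set f : ℕ → Ω → ℝ := fun n ω => (C / mu) * ind n ω - C * acost n ω with hfdef
  have hindmeas : ∀ n, Measurable (ind n) := fun n =>
    Measurable.ite (measurableSet_le (hWmeas _) measurable_const)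
      measurable_const measurable_const
  have hacostmeas : ∀ n, Measurable (acost n) := fun n =>
    (measurable_const.min (hWmeas _)).sub (measurable_const.min (hWmeas _))
  have hfmeas : ∀ n, Measurable (f n) := fun n =>
    ((hindmeas n).const_mul _).sub ((hacostmeas n).const_mul _)
  -- rewrite integrand
  have hrw : (fun ω =>
        ((C / mu) *
            (∑' n : ℕ,
              if (∑ k ∈ Finset.range (n + 1), (Z (2 * k) ω + Z (2 * k + 1) ω)) ≤ t
              then (1 : ℝ) else 0)
          - C *
            (∑' n : ℕ,
              (min t (∑ k ∈ Finset.range (n + 1), (Z (2 * k) ω + Z (2 * k + 1) ω))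
                - min t
                    ((∑ k ∈ Finset.range n, (Z (2 * k) ω + Z (2 * k + 1) ω))
                      + Z (2 * n) ω)))))
      = fun ω => (C / mu) * (∑' n, ind n ω) - C * (∑' n, acost n ω) := by
    funext ω
    congr 1
    · congr 1
      exact tsum_congr fun n => by rw [hsum1 n ω]
    · congr 1
      exact tsum_congr fun n => by rw [hsum1 n ω, hsum2 n ω]
  -- Chernoff bound
  have hWnn : ∀ᵐ ω ∂P, ∀ m, 0 ≤ W m ω := by
    filter_upwards [hZnn] with ω hω m
    exact Finset.sum_nonneg fun j _ => hω j
  have hmgf : ∀ m, mgf (W m) P (-mu) = (1/2 : ℝ) ^ m := by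
    intro m
    rw [hWfun m, hindep.mgf_sum hmeas (Finset.range m)]
    have : ∀ j ∈ Finset.range m, mgf (Z j) P (-mu) = (1/2 : ℝ) := fun j _ =>
      mgf_of_expLaw hmu (hmeas j) (hlaw j)
    rw [Finset.prod_congr rfl this, Finset.prod_const, Finset.card_range]
  have hintexp : ∀ m, Integrable (fun ω => exp (-mu * W m ω)) P := by
    intro m
    refine Integrable.mono' (integrable_const 1)
      ((by fun_prop : Measurable fun ω => exp (-mu * W m ω)).aestronglyMeasurable) ?_
    filter_upwards [hWnn] with ω hω
    rw [Real.norm_eq_abs, abs_of_pos (exp_pos _)]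
    exact exp_le_one_iff.mpr (by nlinarith [hω m])
  have chern : ∀ m, (P {ω | W m ω ≤ t}).toReal ≤ exp (mu * t) * (1/2 : ℝ) ^ m := by
    intro m
    have h := measure_le_le_exp_mul_mgf (μ := P) (X := W m) t
      (neg_nonpos.mpr hmu.le) (hintexp m)
    rwa [neg_neg, hmgf m] at h
  have hPle : ∀ m, P {ω | W m ω ≤ t} ≤ ENNReal.ofReal (exp (mu * t) * (1/2 : ℝ) ^ m) :=
    fun m => (ENNReal.le_ofReal_iff_toReal_le (measure_ne_top _ _) (by positivity)).mpr
      (chern m)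
  -- lintegral of the indicator terms
  have hindlint : ∀ n, ∫⁻ ω, ENNReal.ofReal (ind n ω) ∂P = P {ω | W (2*n+2) ω ≤ t} := by
    intro n
    have hset : MeasurableSet {ω | W (2*n+2) ω ≤ t} :=
      measurableSet_le (hWmeas _) measurable_const
    have : (fun ω => ENNReal.ofReal (ind n ω))
        = ({ω : Ω | W (2*n+2) ω ≤ t}).indicator (fun _ => (1:ℝ≥0∞)) := by
      funext ω
      by_cases h : W (2*n+2) ω ≤ t
      · rw [hinddef]; simp [h]
      · rw [hinddef]; simp [h]
    rw [this, lintegral_indicator hset, setLIntegral_one]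
  have hsummgeo : Summable (fun n : ℕ => exp (mu*t) * (1/2 : ℝ) ^ (2*n+2)) := by
    apply Summable.mul_left
    apply Summable.of_nonneg_of_le (fun n => by positivity)
      (fun n => pow_le_pow_of_le_one (by norm_num) (by norm_num) (by omega : n ≤ 2*n+2))
    exact summable_geometric_of_lt_one (by norm_num) (by norm_num)
  have hsumind : (∑' n, ∫⁻ ω, ENNReal.ofReal (ind n ω) ∂P) ≠ ⊤ := by
    have hb : (∑' n, ∫⁻ ω, ENNReal.ofReal (ind n ω) ∂P)
        ≤ ∑' n : ℕ, ENNReal.ofReal (exp (mu*t) * (1/2 : ℝ) ^ (2*n+2)) := by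
      apply ENNReal.tsum_le_tsum
      intro n
      rw [hindlint n]
      exact hPle (2*n+2)
    refine ne_top_of_le_ne_top ?_ hb
    rw [← ENNReal.ofReal_tsum_of_nonneg (fun n => by positivity) hsummgeo]
    exact ENNReal.ofReal_ne_top
  -- a.e. summability of the indicator series
  have hindsummable : ∀ᵐ ω ∂P, Summable (fun n => ind n ω) := by
    have hlt := lintegral_tsum
      (fun n => ((hindmeas n).ennreal_ofReal.aemeasurable : AEMeasurable _ P))
    have hfin : ∫⁻ ω, (∑' n, ENNReal.ofReal (ind n ω)) ∂P ≠ ⊤ := by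
      rw [hlt]; exact hsumind
    have hmeastsum : Measurable fun ω => ∑' n, ENNReal.ofReal (ind n ω) :=
      Measurable.ennreal_tsum fun n => (hindmeas n).ennreal_ofReal
    have hae := ae_lt_top hmeastsum hfin
    filter_upwards [hae] with ω hω
    have hsum := ENNReal.summable_toReal hω.ne
    refine hsum.congr fun n => ?_
    apply ENNReal.toReal_ofReal
    simp only [hinddef]; split_ifs <;> norm_num
  -- pathwise facts about the cost series
  have hcostfacts : ∀ᵐ ω ∂P, (∀ n, 0 ≤ acost n ω) ∧ Summable (fun n => acost n ω) ∧
      (∑' n, acost n ω) ≤ t := by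
    filter_upwards [hZnn] with ω hω
    have hmono : ∀ m m', m ≤ m' → W m ω ≤ W m' ω := by
      intro m m' hm
      apply Finset.sum_le_sum_of_subset_of_nonneg (Finset.range_subset_range.mpr hm)
      exact fun j _ _ => hω j
    have hnn : ∀ n, 0 ≤ acost n ω := by
      intro n
      rw [hacostdef]
      simp only [sub_nonneg]
      exact min_le_min le_rfl (hmono _ _ (by omega))
    have hW0 : W 0 ω = 0 := by rw [hWdef]; simp
    have hpartial : ∀ N, (∑ n ∈ Finset.range N, acost n ω) ≤ t := by
      intro N
      have hle : (∑ n ∈ Finset.range N, acost n ω)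
          ≤ ∑ n ∈ Finset.range N, (min t (W (2*(n+1)) ω) - min t (W (2*n) ω)) := by
        apply Finset.sum_le_sum
        intro n _
        rw [hacostdef]
        simp only
        have h1 : W (2*n) ω ≤ W (2*n+1) ω := hmono _ _ (by omega)
        have h2 : (2*(n+1)) = 2*n+2 := by ring
        rw [h2]
        have := min_le_min (le_refl t) h1
        linarith
      refine hle.trans ?_
      rw [Finset.sum_range_sub (fun n => min t (W (2*n) ω)) N]
      have : min t (W 0 ω) = 0 := by rw [hW0]; exact min_eq_right ht
      rw [this, sub_zero]
      exact min_le_left _ _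
    have hsummable : Summable (fun n => acost n ω) :=
      summable_of_sum_range_le hnn hpartial
    exact ⟨hnn, hsummable, Summable.tsum_le_of_sum_range_le hsummable hpartial⟩
  -- sum of lintegrals of the cost terms
  have hsumacost : (∑' n, ∫⁻ ω, ENNReal.ofReal (acost n ω) ∂P) ≤ ENNReal.ofReal t := by
    rw [← lintegral_tsum (fun n => ((hacostmeas n).ennreal_ofReal.aemeasurable))]
    calc ∫⁻ ω, (∑' n, ENNReal.ofReal (acost n ω)) ∂P
        ≤ ∫⁻ _, ENNReal.ofReal t ∂P := by
          apply lintegral_mono_ae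
          filter_upwards [hcostfacts] with ω hω
          rw [← ENNReal.ofReal_tsum_of_nonneg hω.1 hω.2.1]
          exact ENNReal.ofReal_le_ofReal hω.2.2
      _ = ENNReal.ofReal t := by rw [lintegral_const, measure_univ, mul_one]
  -- the interchange of sum and integral
  have hnorm : ∀ n, ∫⁻ ω, ↑‖f n ω‖₊ ∂P
      ≤ ENNReal.ofReal (C/mu) * (∫⁻ ω, ENNReal.ofReal (ind n ω) ∂P)
        + ENNReal.ofReal C * (∫⁻ ω, ENNReal.ofReal (acost n ω) ∂P) := by
    intro n
    rw [← lintegral_const_mul _ (hindmeas n).ennreal_ofReal,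
      ← lintegral_const_mul _ (hacostmeas n).ennreal_ofReal,
      ← lintegral_add_left (by fun_prop)]
    apply lintegral_mono_ae
    filter_upwards [hcostfacts, hZnn] with ω hω hz
    have hindnn : 0 ≤ ind n ω := by simp only [hinddef]; split_ifs <;> norm_num
    have h1 : ↑‖f n ω‖₊ = ENNReal.ofReal |f n ω| := by
      rw [← Real.norm_eq_abs, ofReal_norm_eq_enorm]; rfl
    have hCmu : (0:ℝ) ≤ C / mu := div_nonneg hC.le hmu.le
    rw [h1, ← ENNReal.ofReal_mul hCmu, ← ENNReal.ofReal_mul hC.le,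
      ← ENNReal.ofReal_add (mul_nonneg hCmu hindnn) (mul_nonneg hC.le (hω.1 n))]
    apply ENNReal.ofReal_le_ofReal
    rw [hfdef]
    simp only
    calc |(C/mu) * ind n ω - C * acost n ω|
        ≤ |(C/mu) * ind n ω| + |C * acost n ω| := abs_sub _ _
      _ = (C/mu) * ind n ω + C * acost n ω := by
          rw [abs_of_nonneg (mul_nonneg (div_nonneg hC.le hmu.le) hindnn),
            abs_of_nonneg (mul_nonneg hC.le (hω.1 n))]
  have hfsum : (∑' n, ∫⁻ ω, ↑‖f n ω‖₊ ∂P) ≠ ⊤ := by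
    have hb := ENNReal.tsum_le_tsum hnorm
    rw [ENNReal.tsum_add, ENNReal.tsum_mul_left, ENNReal.tsum_mul_left] at hb
    refine ne_top_of_le_ne_top ?_ hb
    apply ENNReal.add_ne_top.mpr
    constructor
    · exact ENNReal.mul_ne_top ENNReal.ofReal_ne_top hsumind
    · exact ENNReal.mul_ne_top ENNReal.ofReal_ne_top
        (ne_top_of_le_ne_top ENNReal.ofReal_ne_top hsumacost)
  have key := integral_tsum (fun n => (hfmeas n).aestronglyMeasurable) hfsum
  -- a.e. identification of the integrand with the series
  have haeid : (fun ω => (C / mu) * (∑' n, ind n ω) - C * (∑' n, acost n ω))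
      =ᵐ[P] fun ω => ∑' n, f n ω := by
    filter_upwards [hindsummable, hcostfacts] with ω h1 h2
    rw [hfdef]
    simp only
    rw [Summable.tsum_sub (h1.mul_left _) (h2.2.1.mul_left _), tsum_mul_left, tsum_mul_left]
  -- each term has zero expectation
  have hterm : ∀ n, ∫ ω, f n ω ∂P = 0 := by
    intro n
    have hWadd : ∀ ω, W (2*n+2) ω = W (2*n+1) ω + Z (2*n+1) ω := by
      intro ω
      rw [hWdef]
      simp only
      have e : 2*n+2 = (2*n+1)+1 := by ring
      rw [e, Finset.sum_range_succ]
    have hindep' : IndepFun (W (2*n+1)) (Z (2*n+1)) P := by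
      rw [hWfun]
      exact hindep.indepFun_finset_sum_of_notMem hmeas (by simp)
    have hBpos : 0 ≤ᵐ[P] W (2*n+1) := by
      filter_upwards [hWnn] with ω hω
      exact hω _
    have h := pair_zero P hmu hC ht (hWmeas (2*n+1)) (hmeas (2*n+1)) hindep'
      hBpos (hlaw (2*n+1))
    rw [← h]
    apply integral_congr_ae
    apply ae_of_all
    intro ω
    rw [hfdef, hinddef, hacostdef]
    simp only [hWadd ω]
  rw [hrw, integral_congr_ae haeid, key]
  simp only [hterm, tsum_zero]
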